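/- Let κ ≥ 2 and z ∈ ℂ with |z| < κ + 1 and z ∉ [−2√κ, 2√κ]. Define F_z(w) = ((w² − 1)² / ((w² − κ)(w² − 1/κ))) · 1/(√κ(w² + 1) − z w). Then F_z has simple poles at w = ±1/√κ inside the unit disc, with residues Res(F_z, ±κ^{−1/2}) = ±(1 − κ)/(2(1 + κ)(1 + κ ∓ z)). -/

import Mathlib

open Filter Topology

/-- General helper: limit of `(w - p) * F z w` at a simple pole `p` with `p² = 1/κ`. -/
lemma res_lim_aux (κ s z p : ℂ) (hp : p ≠ 0) (h1 : p ^ 2 = 1 / κ)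
    (h2 : p ^ 2 - κ ≠ 0) (h3 : s * (p ^ 2 + 1) - z * p ≠ 0) :
    Tendsto
      (fun w : ℂ => (w - p) *
        (((w ^ 2 - 1) ^ 2 / ((w ^ 2 - κ) * (w ^ 2 - 1 / κ))) *
          (1 / (s * (w ^ 2 + 1) - z * w))))
      (𝓝[≠] p)
      (𝓝 ((p ^ 2 - 1) ^ 2 / ((p ^ 2 - κ) * (p + p)) * (1 / (s * (p ^ 2 + 1) - z * p)))) := by
  have hpp : p + p ≠ 0 := by
    rw [← two_mul]; exact mul_ne_zero two_ne_zero hp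
  have hc : ContinuousAt (fun w : ℂ =>
      (w ^ 2 - 1) ^ 2 / ((w ^ 2 - κ) * (w + p)) * (1 / (s * (w ^ 2 + 1) - z * w))) p := by
    apply ContinuousAt.mul
    · exact ContinuousAt.div (by fun_prop) (by fun_prop) (mul_ne_zero h2 hpp)
    · exact ContinuousAt.div (by fun_prop) (by fun_prop) h3
  have hT : Tendsto (fun w : ℂ =>
      (w ^ 2 - 1) ^ 2 / ((w ^ 2 - κ) * (w + p)) * (1 / (s * (w ^ 2 + 1) - z * w))) (𝓝[≠] p)
      (𝓝 ((p ^ 2 - 1) ^ 2 / ((p ^ 2 - κ) * (p + p)) * (1 / (s * (p ^ 2 + 1) - z * p)))) :=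
    hc.tendsto.mono_left nhdsWithin_le_nhds
  refine Tendsto.congr' ?_ hT
  have e1 : ∀ᶠ w : ℂ in 𝓝 p, w ^ 2 - κ ≠ 0 :=
    (by fun_prop : ContinuousAt (fun w : ℂ => w ^ 2 - κ) p).eventually_ne h2
  have e2 : ∀ᶠ w : ℂ in 𝓝 p, w + p ≠ 0 :=
    (by fun_prop : ContinuousAt (fun w : ℂ => w + p) p).eventually_ne hpp
  have e3 : ∀ᶠ w : ℂ in 𝓝 p, s * (w ^ 2 + 1) - z * w ≠ 0 :=
    (by fun_prop : ContinuousAt (fun w : ℂ => s * (w ^ 2 + 1) - z * w) p).eventually_ne h3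
  filter_upwards [nhdsWithin_le_nhds e1, nhdsWithin_le_nhds e2, nhdsWithin_le_nhds e3,
    self_mem_nhdsWithin] with w hw1 hw2 hw3 hw4
  have hwp : w - p ≠ 0 := sub_ne_zero.mpr hw4
  have key : w ^ 2 - 1 / κ = (w - p) * (w + p) := by rw [← h1]; ring
  rw [key]
  field_simp

/-- The function `F_z(w) = ((w²−1)²/((w²−κ)(w²−1/κ))) · 1/(√κ(w²+1) − zw)` has
simple poles at `w = ±1/√κ`, which lie inside the unit disc, with residues
`Res(F_z, ±κ^{−1/2}) = ±(1−κ)/(2(1+κ)(1+κ∓z))` (equation (4.11)). -/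
theorem free_laplacian_contour_residues (κ : ℕ) (hκ : 2 ≤ κ) (z : ℂ)
    (hz1 : ‖z‖ < (κ : ℝ) + 1)
    (hz2 : ∀ t : ℝ, t ∈ Set.Icc (-(2 * Real.sqrt κ)) (2 * Real.sqrt κ) → z ≠ (t : ℂ)) :
    ‖(1 : ℂ) / (Real.sqrt κ : ℂ)‖ < 1 ∧
    Tendsto
      (fun w : ℂ => (w - 1 / (Real.sqrt κ : ℂ)) *
        (((w ^ 2 - 1) ^ 2 / ((w ^ 2 - (κ : ℂ)) * (w ^ 2 - 1 / (κ : ℂ)))) *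
          (1 / ((Real.sqrt κ : ℂ) * (w ^ 2 + 1) - z * w))))
      (𝓝[≠] (1 / (Real.sqrt κ : ℂ)))
      (𝓝 ((1 - (κ : ℂ)) / (2 * (1 + (κ : ℂ)) * (1 + (κ : ℂ) - z)))) ∧
    Tendsto
      (fun w : ℂ => (w + 1 / (Real.sqrt κ : ℂ)) *
        (((w ^ 2 - 1) ^ 2 / ((w ^ 2 - (κ : ℂ)) * (w ^ 2 - 1 / (κ : ℂ)))) *
          (1 / ((Real.sqrt κ : ℂ) * (w ^ 2 + 1) - z * w))))
      (𝓝[≠] (-(1 / (Real.sqrt κ : ℂ))))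
      (𝓝 (-((1 - (κ : ℂ)) / (2 * (1 + (κ : ℂ)) * (1 + (κ : ℂ) + z))))) := by
  have hκ0 : (0:ℝ) ≤ (κ:ℝ) := by positivity
  set s : ℂ := ((Real.sqrt κ : ℝ) : ℂ) with hs_def
  have hs2 : s ^ 2 = (κ:ℂ) := by
    rw [hs_def, ← Complex.ofReal_pow, Real.sq_sqrt hκ0]
    push_cast
    ring
  have hsR : 1 < Real.sqrt κ := by
    have h2' : (1:ℝ) < (κ:ℝ) := by
      have : (2:ℝ) ≤ (κ:ℝ) := by exact_mod_cast hκ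
      linarith
    rw [show (1:ℝ) = Real.sqrt 1 by simp]
    exact Real.sqrt_lt_sqrt (by norm_num) h2'
  have hs0 : s ≠ 0 := Complex.ofReal_ne_zero.mpr (by linarith)
  have hκC : (κ:ℂ) ≠ 0 := Nat.cast_ne_zero.mpr (by omega)
  have hp2 : ((1:ℂ)/s) ^ 2 = 1 / (κ:ℂ) := by rw [div_pow, one_pow, hs2]
  have hne : ((κ:ℂ))^2 ≠ 1 := by
    intro h
    have : (κ:ℕ)^2 = 1 := by exact_mod_cast h
    nlinarith
  have h2 : ((1:ℂ)/s) ^ 2 - (κ:ℂ) ≠ 0 := by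
    rw [hp2]
    intro h
    apply hne
    field_simp at h
    linear_combination -h
  have hk1 : (1:ℂ) + κ ≠ 0 := by
    intro h
    have h' : ((1+κ:ℕ):ℂ) = 0 := by push_cast; linear_combination h
    exact Nat.cast_ne_zero.mpr (by omega) h'
  have hab : ‖(1 + (κ:ℂ))‖ = (κ:ℝ) + 1 := by
    rw [show (1:ℂ) + κ = (((κ:ℝ)+1 : ℝ):ℂ) by push_cast; ring, Complex.norm_real, Real.norm_eq_abs,
      abs_of_nonneg (by positivity)]
  have hz3 : (1:ℂ) + κ - z ≠ 0 := by
    intro h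
    have hz : z = 1 + (κ:ℂ) := by linear_combination -h
    rw [hz, hab] at hz1
    exact lt_irrefl _ hz1
  have hz4 : (1:ℂ) + κ + z ≠ 0 := by
    intro h
    have hz : z = -(1 + (κ:ℂ)) := by linear_combination h
    rw [hz] at hz1
    simp only [norm_neg, hab] at hz1
    exact lt_irrefl _ hz1
  have key1 : s * (((1:ℂ)/s) ^ 2 + 1) - z * ((1:ℂ)/s) = (1 + (κ:ℂ) - z)/s := by
    field_simp
    linear_combination hs2
  have key2 : s * ((-((1:ℂ)/s)) ^ 2 + 1) - z * (-((1:ℂ)/s)) = (1 + (κ:ℂ) + z)/s := by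
    field_simp
    linear_combination hs2
  have h3 : s * (((1:ℂ)/s) ^ 2 + 1) - z * ((1:ℂ)/s) ≠ 0 := by
    rw [key1]; exact div_ne_zero hz3 hs0
  have h3' : s * ((-((1:ℂ)/s)) ^ 2 + 1) - z * (-((1:ℂ)/s)) ≠ 0 := by
    rw [key2]; exact div_ne_zero hz4 hs0
  have hp2' : (-((1:ℂ)/s)) ^ 2 = 1 / (κ:ℂ) := by rw [neg_sq]; exact hp2
  have h2' : (-((1:ℂ)/s)) ^ 2 - (κ:ℂ) ≠ 0 := by rw [neg_sq]; exact h2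
  refine ⟨?_, ?_, ?_⟩
  · rw [show (1:ℂ) / (Real.sqrt κ : ℂ) = 1/s from rfl, norm_div, norm_one, hs_def,
      Complex.norm_real, Real.norm_eq_abs, abs_of_nonneg (Real.sqrt_nonneg _), div_lt_one (by linarith)]
    exact hsR
  · have H := res_lim_aux (κ:ℂ) s z (1/s) (one_div_ne_zero hs0) hp2 h2 h3
    have hd : (1:ℂ)/κ - κ ≠ 0 := by rw [← hp2]; exact h2
    rw [← hs2] at hk1 hz3 h2
    convert H using 2
    rw [key1, ← hs2, mul_one_div, div_div]
    rw [div_eq_div_iff (by exact mul_ne_zero (mul_ne_zero two_ne_zero hk1) hz3)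
      (mul_ne_zero (mul_ne_zero h2 (by
        rw [← two_mul]; exact mul_ne_zero two_ne_zero (one_div_ne_zero hs0)))
        (div_ne_zero hz3 hs0))]
    field_simp
    ring
  · have H := res_lim_aux (κ:ℂ) s z (-(1/s)) (neg_ne_zero.mpr (one_div_ne_zero hs0)) hp2' h2' h3'
    have hd : (1:ℂ)/κ - κ ≠ 0 := by rw [← hp2]; exact h2
    rw [← hs2] at hk1 hz4 h2'
    convert H using 2
    · ring
    rw [key2, ← hs2, mul_one_div, div_div, ← neg_div]
    rw [div_eq_div_iff (by exact mul_ne_zero (mul_ne_zero two_ne_zero hk1) hz4)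
      (mul_ne_zero (mul_ne_zero h2' (by
        rw [show -(1/s) + -(1/s) = -(2 * (1/s)) by ring]
        exact neg_ne_zero.mpr (mul_ne_zero two_ne_zero (one_div_ne_zero hs0))))
        (div_ne_zero hz4 hs0))]
    field_simp
    ring
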